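/- Let Γ = Y I_a be the stoichiometric matrix of a CRN, where Y is the complex matrix and I_a the incidence matrix. Then dim(ker(Y) ∩ im(I_a)) = n − ℓ − rank(Γ), where n is the number of complexes and ℓ is the number of connected components (linkage classes) of the reaction graph. -/
import Mathlib

open Matrix

private lemma walk_const {V : Type*} {G : SimpleGraph V} {f : V → ℝ}
    (hf : ∀ a b, G.Adj a b → f a = f b) {v w : V} (q : G.Walk v w) : f v = f w := by
  induction q with
  | nil => rfl
  | cons h _ ih => exact (hf _ _ h).trans ih

/-- kernel of transposed incidence matrix has dimension = number of components -/
private lemma ker_transpose_finrank (n r : ℕ) (s p : Fin r → Fin n)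
    (Ia : Matrix (Fin n) (Fin r) ℝ)
    (hIa : ∀ i k, Ia i k = (if i = p k then (1 : ℝ) else 0) - (if i = s k then 1 else 0)) :
    Module.finrank ℝ ↥(LinearMap.ker Iaᵀ.mulVecLin)
      = Nat.card (SimpleGraph.fromRel fun i j => ∃ k, s k = i ∧ p k = j).ConnectedComponent := by
  classical
  set G := SimpleGraph.fromRel fun i j => ∃ k, s k = i ∧ p k = j with hG
  have hmem : ∀ x : Fin n → ℝ, x ∈ LinearMap.ker Iaᵀ.mulVecLin ↔ ∀ k, x (p k) = x (s k) := by
    intro x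
    have hval : ∀ k, Iaᵀ.mulVecLin x k = x (p k) - x (s k) := by
      intro k
      simp only [mulVecLin_apply, mulVec, dotProduct, transpose_apply]
      have : ∀ i, Ia i k * x i
          = (if i = p k then x i else 0) - (if i = s k then x i else 0) := by
        intro i; rw [hIa]; ring_nf
        by_cases h1 : i = p k <;> by_cases h2 : i = s k <;> simp [h1, h2]
      rw [Finset.sum_congr rfl fun i _ => this i, Finset.sum_sub_distrib]
      simp [Finset.sum_ite_eq']
    constructor
    · intro hx k
      have := congrFun (LinearMap.mem_ker.mp hx) k
      rw [hval k] at this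
      have h0 : x (p k) - x (s k) = 0 := by simpa using this
      linarith
    · intro h
      ext k
      rw [hval k, h k]; simp
  have hadj : ∀ x : Fin n → ℝ, (∀ k, x (p k) = x (s k)) →
      ∀ a b, G.Adj a b → x a = x b := by
    intro x hx a b hab
    rw [hG, SimpleGraph.fromRel_adj] at hab
    rcases hab.2 with ⟨k, hk1, hk2⟩ | ⟨k, hk1, hk2⟩
    · rw [← hk1, ← hk2]; exact (hx k).symm
    · rw [← hk1, ← hk2]; exact hx k
  -- linear equiv between the kernel and functions on connected components
  have : Nonempty (↥(LinearMap.ker Iaᵀ.mulVecLin) ≃ₗ[ℝ] (G.ConnectedComponent → ℝ)) := by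
    refine ⟨{
      toFun := fun x => SimpleGraph.ConnectedComponent.lift (fun i => x.1 i)
        (fun v w q _ => walk_const (hadj x.1 ((hmem x.1).mp x.2)) q)
      map_add' := by
        intro x y
        ext c
        refine SimpleGraph.ConnectedComponent.ind (fun v => ?_) c
        simp
      map_smul' := by
        intro c x
        ext d
        refine SimpleGraph.ConnectedComponent.ind (fun v => ?_) d
        simp
      invFun := fun g => ⟨fun i => g (G.connectedComponentMk i), by
        rw [hmem]
        intro k
        congr 1
        by_cases h : p k = s k
        · rw [h]
        · exact SimpleGraph.ConnectedComponent.sound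
            (SimpleGraph.Adj.reachable (by
              rw [hG, SimpleGraph.fromRel_adj]
              exact ⟨h, Or.inr ⟨k, rfl, rfl⟩⟩))⟩
      left_inv := by
        intro x
        ext i
        simp
      right_inv := by
        intro g
        ext c
        refine SimpleGraph.ConnectedComponent.ind (fun v => ?_) c
        simp }⟩
  obtain ⟨e⟩ := this
  have : Finite G.ConnectedComponent := Quot.finite _
  have : Fintype G.ConnectedComponent := Fintype.ofFinite _
  rw [e.finrank_eq, Module.finrank_pi, Nat.card_eq_fintype_card]

theorem deficiency_eq_n_sub_l_sub_rank (m n r : ℕ)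
    (Y : Matrix (Fin m) (Fin n) ℝ) (s p : Fin r → Fin n)
    (Ia : Matrix (Fin n) (Fin r) ℝ)
    (hIa : ∀ i k, Ia i k = (if i = p k then (1 : ℝ) else 0) - (if i = s k then 1 else 0)) :
    Module.finrank ℝ ↥(LinearMap.ker Y.mulVecLin ⊓ LinearMap.range Ia.mulVecLin)
      = n - Nat.card (SimpleGraph.fromRel fun i j => ∃ k, s k = i ∧ p k = j).ConnectedComponent
        - (Y * Ia).rank := by
  classical
  set W := LinearMap.range Ia.mulVecLin with hW
  set ℓ := Nat.card (SimpleGraph.fromRel fun i j => ∃ k, s k = i ∧ p k = j).ConnectedComponent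
  -- rank Ia = n - ℓ  via rank-nullity on Iaᵀ
  have h1 : Module.finrank ℝ ↥W + ℓ = n := by
    have hker := ker_transpose_finrank n r s p Ia hIa
    have hrn := LinearMap.finrank_range_add_finrank_ker Iaᵀ.mulVecLin
    simp only [Module.finrank_pi, Fintype.card_fin] at hrn
    have htr : Module.finrank ℝ ↥(LinearMap.range Iaᵀ.mulVecLin) = Module.finrank ℝ ↥W := by
      have := Matrix.rank_transpose Ia
      simpa [Matrix.rank] using this
    rw [htr, hker] at hrn
    exact hrn
  -- rank-nullity for Y restricted to W
  have h2 : (Y * Ia).rank + Module.finrank ℝ ↥(LinearMap.ker Y.mulVecLin ⊓ W)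
      = Module.finrank ℝ ↥W := by
    have hrn := LinearMap.finrank_range_add_finrank_ker (Y.mulVecLin.comp W.subtype)
    have hrange : LinearMap.range (Y.mulVecLin.comp W.subtype)
        = LinearMap.range (Y * Ia).mulVecLin := by
      rw [LinearMap.range_comp, Submodule.range_subtype, Matrix.mulVecLin_mul,
        LinearMap.range_comp, ← hW]
    have hker : LinearMap.ker (Y.mulVecLin.comp W.subtype)
        = Submodule.comap W.subtype (LinearMap.ker Y.mulVecLin) := by
      rw [LinearMap.ker_comp]
    have hkfin : Module.finrank ℝ ↥(LinearMap.ker (Y.mulVecLin.comp W.subtype))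
        = Module.finrank ℝ ↥(LinearMap.ker Y.mulVecLin ⊓ W) := by
      rw [hker]
      have e : Submodule.comap W.subtype (LinearMap.ker Y.mulVecLin)
          = Submodule.comap W.subtype (LinearMap.ker Y.mulVecLin ⊓ W) := by
        rw [Submodule.comap_inf, Submodule.comap_subtype_self, inf_top_eq]
      rw [e]
      exact (Submodule.comapSubtypeEquivOfLe inf_le_right).finrank_eq
    rw [hrange, hkfin] at hrn
    exact hrn
  have hrankdef : (Y * Ia).rank = Module.finrank ℝ ↥(LinearMap.range (Y * Ia).mulVecLin) := rfl
  omega
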